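/- arXiv:1512.07474 — 9 statements merged into one kernel-verified Lean document; each statement's English description precedes it below -/
import Mathlib

section
/- Let T be a set, Y ⊆ ℝ^T a compact subspace, (Z,d) a metric space, f : Y → Z continuous, ε ≥ 0, and S ⊆ T such that d(f(y'), f(y'')) ≤ ε whenever y', y'' ∈ Y agree on S. Then for every ε' > ε there exist a finite set S₀ ⊆ S and δ > 0 such that d(f(y'), f(y'')) ≤ ε' for all y', y'' ∈ Y with |y'(s) - y''(s)| < δ for each s ∈ S₀. -/
/-- Proposition 2.2: if a continuous map on a compact `Y ⊆ ℝ^T` into a metric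
space varies by at most `ε` over pairs agreeing on `S`, then for every
`ε' > ε` the `ε'`-bound holds on pairs that are `δ`-close on some finite
`S₀ ⊆ S`. -/
theorem stmt1 {T Z : Type*} [MetricSpace Z] (Y : Set (T → ℝ)) (hY : IsCompact Y)
    (f : Y → Z) (hf : Continuous f) (ε : ℝ) (hε : 0 ≤ ε) (S : Set T)
    (h : ∀ y' y'' : Y, (∀ s ∈ S, (y' : T → ℝ) s = (y'' : T → ℝ) s) →
      dist (f y') (f y'') ≤ ε) :
    ∀ ε' > ε, ∃ S₀ : Finset T, ↑S₀ ⊆ S ∧ ∃ δ > (0 : ℝ),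
      ∀ y' y'' : Y, (∀ s ∈ S₀, |(y' : T → ℝ) s - (y'' : T → ℝ) s| < δ) →
        dist (f y') (f y'') ≤ ε' := by
  classical
  intro ε' hε'
  by_contra hcon
  push_neg at hcon
  haveI : CompactSpace Y := isCompact_iff_compactSpace.mp hY
  set ι := {p : Finset T × ℝ // ↑p.1 ⊆ S ∧ 0 < p.2} with hι
  haveI : Nonempty ι := ⟨⟨(∅, 1), by simp⟩⟩
  set C : ι → Set (Y × Y) := fun i =>
    {p | (∀ s ∈ i.1.1, |(p.1 : T → ℝ) s - (p.2 : T → ℝ) s| ≤ i.1.2) ∧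
      ε' ≤ dist (f p.1) (f p.2)} with hC
  have hclosed : ∀ i, IsClosed (C i) := by
    intro i
    apply IsClosed.inter
    · show IsClosed {p : Y × Y | ∀ s ∈ i.1.1, |(p.1 : T → ℝ) s - (p.2 : T → ℝ) s| ≤ i.1.2}
      have : {p : Y × Y | ∀ s ∈ i.1.1, |(p.1 : T → ℝ) s - (p.2 : T → ℝ) s| ≤ i.1.2}
        = ⋂ s ∈ i.1.1, {p : Y × Y | |(p.1 : T → ℝ) s - (p.2 : T → ℝ) s| ≤ i.1.2} := by
        ext p; simp
      rw [this]
      refine isClosed_biInter fun s _ => ?_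
      have hc : Continuous fun p : Y × Y => |(p.1 : T → ℝ) s - (p.2 : T → ℝ) s| := by
        apply Continuous.abs
        exact ((continuous_apply s).comp (continuous_subtype_val.comp continuous_fst)).sub
          ((continuous_apply s).comp (continuous_subtype_val.comp continuous_snd))
      exact isClosed_le hc continuous_const
    · exact isClosed_le continuous_const
        ((hf.comp continuous_fst).dist (hf.comp continuous_snd))
  have hne : ∀ i, (C i).Nonempty := by
    intro i
    obtain ⟨y', y'', hclose, hd⟩ := hcon i.1.1 i.2.1 i.1.2 i.2.2
    exact ⟨(y', y''), fun s hs => (hclose s hs).le, hd.le⟩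
  have hdir : Directed (· ⊇ ·) C := by
    intro i j
    refine ⟨⟨(i.1.1 ∪ j.1.1, min i.1.2 j.1.2),
      by simp [Finset.coe_union, Set.union_subset i.2.1 j.2.1], lt_min i.2.2 j.2.2⟩, ?_, ?_⟩
    · rintro p ⟨h1, h2⟩
      exact ⟨fun s hs => (h1 s (Finset.mem_union_left _ hs)).trans (min_le_left _ _), h2⟩
    · rintro p ⟨h1, h2⟩
      exact ⟨fun s hs => (h1 s (Finset.mem_union_right _ hs)).trans (min_le_right _ _), h2⟩
  obtain ⟨p, hp⟩ := IsCompact.nonempty_iInter_of_directed_nonempty_isCompact_isClosed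
    C hdir hne (fun i => (hclosed i).isCompact) hclosed
  have hagree : ∀ s ∈ S, (p.1 : T → ℝ) s = (p.2 : T → ℝ) s := by
    intro s hs
    have habs : |(p.1 : T → ℝ) s - (p.2 : T → ℝ) s| ≤ 0 := by
      refine le_of_forall_pos_le_add fun δ hδ => ?_
      have := Set.mem_iInter.mp hp ⟨({s}, δ), by simpa using hs, hδ⟩
      simpa using this.1 s (Finset.mem_singleton_self s)
    have := abs_nonneg ((p.1 : T → ℝ) s - (p.2 : T → ℝ) s)
    have : |(p.1 : T → ℝ) s - (p.2 : T → ℝ) s| = 0 := le_antisymm habs this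
    linarith [abs_eq_zero.mp this, sub_eq_zero.mp (abs_eq_zero.mp this)]
  have h1 := h p.1 p.2 hagree
  have h2 := (Set.mem_iInter.mp hp (Classical.arbitrary ι)).2
  linarith
end

section
/- Let T be a set, X ⊆ ℝ^T a compact subspace, S a set, φ : X → ℝ^S a continuous mapping, and S₀ ⊆ S a countable subset. Then there exists a countable set T₀ ⊆ T such that φ(x')|_{S₀} = φ(x'')|_{S₀} for all x', x'' ∈ X with x'|_{T₀} = x''|_{T₀}. -/
open Filter Set
open scoped Uniformity

/-- Any entourage of a product `T → ℝ` contains the set of pairs agreeing on a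
finite set of coordinates. -/
lemma pi_entourage_finite {T : Type*} {U : Set ((T → ℝ) × (T → ℝ))}
    (hU : U ∈ 𝓤 (T → ℝ)) :
    ∃ F : Set T, F.Finite ∧ ∀ x y : T → ℝ, (∀ t ∈ F, x t = y t) → (x, y) ∈ U := by
  rw [Pi.uniformity] at hU
  rcases Filter.mem_iInf.mp hU with ⟨I, hIfin, V, hV, rfl⟩
  refine ⟨I, hIfin, fun x y hxy => ?_⟩
  rw [Set.mem_iInter]
  intro i
  rcases Filter.mem_comap.mp (hV i) with ⟨W, hW, hWsub⟩
  apply hWsub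
  have : x (i : T) = y (i : T) := hxy i i.2
  simp only [Set.mem_preimage, this]
  exact refl_mem_uniformity hW

/-- Corollary 2.3: a continuous map from a compact `X ⊆ ℝ^T` to `ℝ^S` depends,
on any countable set of target coordinates `S₀`, upon countably many
coordinates `T₀ ⊆ T`. -/
theorem stmt2 {T S : Type*} (X : Set (T → ℝ)) (hX : IsCompact X)
    (φ : X → S → ℝ) (hφ : Continuous φ) (S₀ : Set S) (hS₀ : S₀.Countable) :
    ∃ T₀ : Set T, T₀.Countable ∧
      ∀ x' x'' : X, (∀ t ∈ T₀, (x' : T → ℝ) t = (x'' : T → ℝ) t) →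
        ∀ s ∈ S₀, φ x' s = φ x'' s := by
  haveI : CompactSpace X := isCompact_iff_compactSpace.mp hX
  haveI : Countable S₀ := hS₀.to_subtype
  have hφu : UniformContinuous φ := CompactSpace.uniformContinuous_of_continuous hφ
  have hcoord : ∀ s : S, UniformContinuous fun x : X => φ x s :=
    uniformContinuous_pi.mp hφu
  -- for each s ∈ S₀ and n : ℕ, get a finite coordinate set
  have key : ∀ (s : S₀) (n : ℕ), ∃ F : Set T, F.Finite ∧
      ∀ x' x'' : X, (∀ t ∈ F, (x' : T → ℝ) t = (x'' : T → ℝ) t) →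
        dist (φ x' s) (φ x'' s) < 1 / (n + 1) := by
    intro s n
    have hB : {p : ℝ × ℝ | dist p.1 p.2 < 1 / (n + 1)} ∈ 𝓤 ℝ :=
      Metric.dist_mem_uniformity (by positivity)
    have h1 : (fun p : X × X => ((φ p.1 s : ℝ), (φ p.2 s : ℝ))) ⁻¹'
        {p : ℝ × ℝ | dist p.1 p.2 < 1 / (n + 1)} ∈ 𝓤 X := hcoord s hB
    rw [uniformity_setCoe] at h1
    rcases Filter.mem_comap.mp h1 with ⟨U, hU, hUsub⟩
    rcases pi_entourage_finite hU with ⟨F, hFfin, hF⟩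
    refine ⟨F, hFfin, fun x' x'' hxy => ?_⟩
    have : ((x' : T → ℝ), (x'' : T → ℝ)) ∈ U := hF _ _ hxy
    exact hUsub (show Prod.map Subtype.val Subtype.val (x', x'') ∈ U from this)
  choose F hFfin hF using key
  refine ⟨⋃ (s : S₀) (n : ℕ), F s n, ?_, ?_⟩
  · exact Set.countable_iUnion fun s => Set.countable_iUnion fun n => (hFfin s n).countable
  · intro x' x'' hxy s hs
    have hd : ∀ n : ℕ, dist (φ x' s) (φ x'' s) < 1 / (n + 1) := by
      intro n
      refine hF ⟨s, hs⟩ n x' x'' fun t ht => hxy t ?_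
      exact Set.mem_iUnion.mpr ⟨⟨s, hs⟩, Set.mem_iUnion.mpr ⟨n, ht⟩⟩
    have : dist (φ x' s) (φ x'' s) ≤ 0 := by
      by_contra h
      push_neg at h
      obtain ⟨n, hn⟩ := exists_nat_one_div_lt h
      exact absurd (hd n) (not_lt.mpr hn.le)
    exact dist_le_zero.mp this
end

section
/- Every continuous real-valued function on a compact subspace X of ℝ^S depends on countably many coordinates: if X ⊆ ℝ^S is compact and g : X → ℝ is continuous, then there exists a countable set S₀ ⊆ S such that g(x') = g(x'') for all x', x'' ∈ X with x'|_{S₀} = x''|_{S₀}. -/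
/-- Every continuous real-valued function on a compact subspace of `ℝ^S`
depends on countably many coordinates. -/
theorem stmt3 {S : Type*} (X : Set (S → ℝ)) (hX : IsCompact X)
    (g : X → ℝ) (hg : Continuous g) :
    ∃ S₀ : Set S, S₀.Countable ∧
      ∀ x' x'' : X, (∀ s ∈ S₀, (x' : S → ℝ) s = (x'' : S → ℝ) s) →
        g x' = g x'' := by
  have key : ∀ ε : ℝ, 0 < ε → ∃ F : Set S, F.Finite ∧
      ∀ x' x'' : X, (∀ s ∈ F, (x' : S → ℝ) s = (x'' : S → ℝ) s) →
        |g x' - g x''| ≤ ε := by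
    intro ε hε
    have h1 : ∀ x : X, ∃ V : Set (S → ℝ), IsOpen V ∧ (x : S → ℝ) ∈ V ∧
        ∀ y : X, (y : S → ℝ) ∈ V → |g y - g x| < ε / 2 := by
      intro x
      have hop : IsOpen (g ⁻¹' Metric.ball (g x) (ε / 2)) :=
        Metric.isOpen_ball.preimage hg
      rw [isOpen_induced_iff] at hop
      obtain ⟨V, hVo, hVeq⟩ := hop
      refine ⟨V, hVo, ?_, ?_⟩
      · have : x ∈ Subtype.val ⁻¹' V := by
          rw [hVeq]; simp [Metric.mem_ball, hε]
        exact this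
      · intro y hy
        have : y ∈ Subtype.val ⁻¹' V := hy
        rw [hVeq] at this
        simpa [Metric.mem_ball, Real.dist_eq] using this
    choose V hVo hxV hVball using h1
    have h2 : ∀ x : X, ∃ (I : Finset S) (u : S → Set ℝ),
        (∀ i ∈ I, IsOpen (u i) ∧ (x : S → ℝ) i ∈ u i) ∧
        (I : Set S).pi u ⊆ V x := fun x => (isOpen_pi_iff.mp (hVo x)) _ (hxV x)
    choose I u hIu hsub using h2
    have hcov : X ⊆ ⋃ x : X, (I x : Set S).pi (u x) := by
      intro y hy
      exact Set.mem_iUnion.mpr ⟨⟨y, hy⟩, fun i hi => (hIu ⟨y, hy⟩ i hi).2⟩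
    have hopen : ∀ x : X, IsOpen ((I x : Set S).pi (u x)) := fun x =>
      isOpen_set_pi (I x).finite_toSet (fun i hi => (hIu x i hi).1)
    obtain ⟨T, hT⟩ := hX.elim_finite_subcover _ hopen hcov
    refine ⟨⋃ x ∈ T, (I x : Set S),
      T.finite_toSet.biUnion (fun x _ => (I x).finite_toSet), ?_⟩
    intro x' x'' hagree
    obtain ⟨x, hxT, hx'⟩ : ∃ x ∈ T, (x' : S → ℝ) ∈ (I x : Set S).pi (u x) := by
      have := hT x'.2
      simpa using this
    have hx'' : (x'' : S → ℝ) ∈ (I x : Set S).pi (u x) := by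
      intro i hi
      have he : (x'' : S → ℝ) i = (x' : S → ℝ) i :=
        (hagree i (Set.mem_biUnion hxT hi)).symm
      rw [he]; exact hx' i hi
    have hb' := hVball x _ (hsub x hx')
    have hb'' := hVball x _ (hsub x hx'')
    calc |g x' - g x''| ≤ |g x' - g x| + |g x - g x''| := abs_sub_le _ _ _
      _ ≤ ε / 2 + ε / 2 := by
          rw [abs_sub_comm (g x)]
          linarith
      _ = ε := by ring
  choose F hFfin hF using fun n : ℕ => key (1 / (n + 1)) (by positivity)
  refine ⟨⋃ n, F n, Set.countable_iUnion (fun n => (hFfin n).countable), ?_⟩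
  intro x' x'' h
  have hle : ∀ n : ℕ, |g x' - g x''| ≤ 1 / (n + 1) := fun n =>
    hF n x' x'' (fun s hs => h s (Set.mem_iUnion.mpr ⟨n, hs⟩))
  have h0 : |g x' - g x''| ≤ 0 := by
    by_contra hc
    push_neg at hc
    obtain ⟨n, hn⟩ := exists_nat_one_div_lt hc
    exact absurd (hle n) (by linarith)
  have := abs_eq_zero.mp (le_antisymm h0 (abs_nonneg _))
  linarith
end

section
/- Let X be a Baire space, T a set, Y ⊆ ℝ^T a compact subspace, and f : X × Y → ℝ a separately continuous function. Suppose that for every nonempty open set U ⊆ X and every ε > 0 there exist a nonempty open set U' ⊆ U and a countable set S' ⊆ T such that |f(x,y') - f(x,y'')| ≤ ε for all x ∈ U' and all y', y'' ∈ Y with y'|_{S'} = y''|_{S'}. Then for every nonempty open U ⊆ X and every ε > 0 there exist a nonempty open U₀ ⊆ U, a finite set S₀ ⊆ T, and δ > 0 such that |f(x,y') - f(x,y'')| ≤ ε for all x ∈ U₀ and all y', y'' ∈ Y with |y'(s) - y''(s)| < δ for every s ∈ S₀. -/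
open Filter Topology

/-- Theorem 2.4, (ii) ⇒ (iii): for a separately continuous function on the
product of a Baire space and a compact `Y ⊆ ℝ^T`, the countable-coordinate
dependence condition implies the finite-coordinate `δ`-dependence condition. -/
theorem stmt5 {X T : Type*} [TopologicalSpace X] [BaireSpace X]
    (Y : Set (T → ℝ)) (hY : IsCompact Y) (f : X → Y → ℝ)
    (hf1 : ∀ y : Y, Continuous fun x => f x y) (hf2 : ∀ x : X, Continuous (f x))
    (H : ∀ U : Set X, IsOpen U → U.Nonempty → ∀ ε > (0 : ℝ),
      ∃ U' : Set X, IsOpen U' ∧ U'.Nonempty ∧ U' ⊆ U ∧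
        ∃ S' : Set T, S'.Countable ∧
          ∀ x ∈ U', ∀ y' y'' : Y, (∀ s ∈ S', (y' : T → ℝ) s = (y'' : T → ℝ) s) →
            |f x y' - f x y''| ≤ ε) :
    ∀ U : Set X, IsOpen U → U.Nonempty → ∀ ε > (0 : ℝ),
      ∃ U₀ : Set X, IsOpen U₀ ∧ U₀.Nonempty ∧ U₀ ⊆ U ∧
        ∃ S₀ : Finset T, ∃ δ > (0 : ℝ),
          ∀ x ∈ U₀, ∀ y' y'' : Y,
            (∀ s ∈ S₀, |(y' : T → ℝ) s - (y'' : T → ℝ) s| < δ) →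
              |f x y' - f x y''| ≤ ε := by
  classical
  intro U hU hUne ε hε
  obtain ⟨U', hU'o, hU'ne, hU'sub, S', hS'c, hS'⟩ := H U hU hUne (ε/2) (by linarith)
  rcases S'.eq_empty_or_nonempty with hS'e | hS'ne
  · refine ⟨U', hU'o, hU'ne, hU'sub, ∅, 1, one_pos, fun x hx y' y'' _ => ?_⟩
    have := hS' x hx y' y'' (by simp [hS'e])
    linarith
  obtain ⟨g, hg⟩ := hS'c.exists_eq_range hS'ne
  haveI : CompactSpace Y := isCompact_iff_compactSpace.mp hY
  set E : ℕ → Set X := fun n => {x | ∀ y' y'' : Y,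
      (∀ i ≤ n, |(y' : T → ℝ) (g i) - (y'' : T → ℝ) (g i)| ≤ 1/(n+1)) →
      |f x y' - f x y''| ≤ ε} with hE
  have hEclosed : ∀ n, IsClosed (E n) := by
    intro n
    have : E n = ⋂ (y' : Y) (y'' : Y)
        (_ : ∀ i ≤ n, |(y' : T → ℝ) (g i) - (y'' : T → ℝ) (g i)| ≤ 1/(n+1)),
        {x | |f x y' - f x y''| ≤ ε} := by
      ext x; simp [hE, Set.mem_iInter]
    rw [this]
    exact isClosed_iInter fun y' => isClosed_iInter fun y'' => isClosed_iInter fun _ =>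
      isClosed_le (((hf1 y').sub (hf1 y'')).abs) continuous_const
  have hcover : ∀ x ∈ U', ∃ n, x ∈ E n := by
    intro x hx
    by_contra hcon
    push_neg at hcon
    have hsel : ∀ n : ℕ, ∃ p : Y × Y,
        (∀ i ≤ n, |(p.1 : T → ℝ) (g i) - (p.2 : T → ℝ) (g i)| ≤ 1/(n+1)) ∧
        ε < |f x p.1 - f x p.2| := by
      intro n
      have h := hcon n
      simp only [hE, Set.mem_setOf_eq, not_forall] at h
      obtain ⟨y', y'', h1, h2⟩ := h
      exact ⟨(y', y''), h1, lt_of_not_ge h2⟩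
    choose u hu1 hu2 using hsel
    obtain ⟨p, hp⟩ := exists_clusterPt_of_compactSpace (map u atTop)
    -- coordinates agree on S'
    have hcoord : ∀ s ∈ S', (p.1 : T → ℝ) s = (p.2 : T → ℝ) s := by
      intro s hs
      rw [hg] at hs
      obtain ⟨i, rfl⟩ := hs
      set φ : Y × Y → ℝ := fun q => (q.1 : T → ℝ) (g i) - (q.2 : T → ℝ) (g i) with hφ
      have hφc : Continuous φ := (((continuous_apply (g i)).comp
        continuous_subtype_val).comp continuous_fst).sub
        (((continuous_apply (g i)).comp continuous_subtype_val).comp continuous_snd)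
      have hcl : ClusterPt (φ p) (map (fun n => φ (u n)) atTop) :=
        hp.map hφc.continuousAt (by rw [Filter.tendsto_map'_iff]; exact tendsto_map)
      have htend : Tendsto (fun n => φ (u n)) atTop (𝓝 0) := by
        apply squeeze_zero_norm' (a := fun n : ℕ => 1/(n+1))
        · filter_upwards [eventually_ge_atTop i] with n hn
          simpa [hφ] using hu1 n i hn
        · exact_mod_cast tendsto_one_div_add_atTop_nhds_zero_nat (𝕜 := ℝ)
      have : φ p = 0 := eq_of_nhds_neBot (hcl.mono htend)
      have := sub_eq_zero.mp this
      exact this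
    have hle : |f x p.1 - f x p.2| ≤ ε/2 := hS' x hx p.1 p.2 hcoord
    -- cluster value of the distances is ≥ ε
    set ψ : Y × Y → ℝ := fun q => |f x q.1 - f x q.2| with hψ
    have hψc : Continuous ψ :=
      (((hf2 x).comp continuous_fst).sub ((hf2 x).comp continuous_snd)).abs
    have hcl : ClusterPt (ψ p) (map (fun n => ψ (u n)) atTop) :=
      hp.map hψc.continuousAt (by rw [Filter.tendsto_map'_iff]; exact tendsto_map)
    have hmem : ψ p ∈ closure {r : ℝ | ε ≤ r} := by
      rw [mem_closure_iff_clusterPt]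
      refine hcl.mono (le_principal_iff.mpr ?_)
      exact mem_map.mpr (Eventually.of_forall fun n => (hu2 n).le)
    have : ε ≤ ψ p := by
      have hc2 : IsClosed {r : ℝ | ε ≤ r} := isClosed_le continuous_const continuous_id
      rw [hc2.closure_eq] at hmem
      exact hmem
    linarith
  -- Baire category argument
  set C : ℕ → Set X := fun n => E n ∪ U'ᶜ with hC
  have hCclosed : ∀ n, IsClosed (C n) := fun n =>
    (hEclosed n).union (isClosed_compl_iff.mpr hU'o)
  have hCunion : ⋃ n, C n = Set.univ := by
    ext x
    simp only [Set.mem_iUnion, Set.mem_univ, iff_true, hC, Set.mem_union, Set.mem_compl_iff]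
    by_cases hx : x ∈ U'
    · obtain ⟨n, hn⟩ := hcover x hx
      exact ⟨n, Or.inl hn⟩
    · exact ⟨0, Or.inr hx⟩
  have hdense := dense_iUnion_interior_of_closed hCclosed hCunion
  obtain ⟨x₀, hx₀d, hx₀U'⟩ := hdense.exists_mem_open hU'o hU'ne
  obtain ⟨n, hx₀n⟩ := Set.mem_iUnion.mp hx₀d
  refine ⟨U' ∩ interior (C n), hU'o.inter isOpen_interior, ⟨x₀, hx₀U', hx₀n⟩,
    fun x hx => hU'sub hx.1, (Finset.range (n+1)).image g, 1/(n+1),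
    by positivity, ?_⟩
  intro x hx y' y'' hy
  have hxE : x ∈ E n := by
    have := interior_subset hx.2
    rcases this with h | h
    · exact h
    · exact absurd hx.1 h
  apply hxE
  intro i hi
  have : g i ∈ (Finset.range (n+1)).image g :=
    Finset.mem_image.mpr ⟨i, Finset.mem_range.mpr (Nat.lt_succ_of_le hi), rfl⟩
  exact (hy (g i) this).le
end

section
/- Let X be a topological space, T a set, Y ⊆ ℝ^T a compact subspace, and f : X × Y → ℝ a separately continuous function. Suppose that for every nonempty open set U ⊆ X and every ε > 0 there exist a nonempty open set U₀ ⊆ U, a finite set S₀ ⊆ T, and δ > 0 such that |f(x,y') - f(x,y'')| ≤ ε for all x ∈ U₀ and all y', y'' ∈ Y with |y'(s) - y''(s)| < δ for each s ∈ S₀. Then for every ε > 0 the set G_ε = {x ∈ X : ω_f(x,y) < ε for all y ∈ Y} is open and dense in X. -/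
open Topology

/-- The oscillation of a real-valued function at a point: the infimum over
neighborhoods `U` of the supremum of `|f p - f q|` over `p, q ∈ U`
(valued in `ℝ≥0∞`). -/
noncomputable def osc {α : Type*} [TopologicalSpace α] (f : α → ℝ) (x : α) : ENNReal :=
  ⨅ U ∈ 𝓝 x, ⨆ p ∈ U, ⨆ q ∈ U, ENNReal.ofReal |f p - f q|

lemma osc_le_of_nhds {α : Type*} [TopologicalSpace α] (f : α → ℝ) (a : α) {W : Set α}
    (hW : W ∈ 𝓝 a) {C : ℝ} (h : ∀ p ∈ W, ∀ q ∈ W, |f p - f q| ≤ C) :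
    osc f a ≤ ENNReal.ofReal C := by
  refine le_trans (iInf₂_le W hW) ?_
  exact iSup₂_le fun p hp => iSup₂_le fun q hq =>
    ENNReal.ofReal_le_ofReal (h p hp q hq)

/-- Theorem 2.4, (iii) ⇒ (i), main step: under the finite-coordinate
`δ`-dependence condition, for every `ε > 0` the set
`G_ε = {x : ω_f(x,y) < ε for all y ∈ Y}` is open and dense. -/
theorem stmt6 {X T : Type*} [TopologicalSpace X]
    (Y : Set (T → ℝ)) (hY : IsCompact Y) (f : X → Y → ℝ)
    (hf1 : ∀ y : Y, Continuous fun x => f x y) (hf2 : ∀ x : X, Continuous (f x))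
    (H : ∀ U : Set X, IsOpen U → U.Nonempty → ∀ ε > (0 : ℝ),
      ∃ U₀ : Set X, IsOpen U₀ ∧ U₀.Nonempty ∧ U₀ ⊆ U ∧
        ∃ S₀ : Finset T, ∃ δ > (0 : ℝ),
          ∀ x ∈ U₀, ∀ y' y'' : Y,
            (∀ s ∈ S₀, |(y' : T → ℝ) s - (y'' : T → ℝ) s| < δ) →
              |f x y' - f x y''| ≤ ε) :
    ∀ ε > (0 : ℝ),
      IsOpen {x : X | ∀ y : Y, osc (fun p : X × Y => f p.1 p.2) (x, y) < ENNReal.ofReal ε} ∧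
      Dense {x : X | ∀ y : Y, osc (fun p : X × Y => f p.1 p.2) (x, y) < ENNReal.ofReal ε} := by
  intro ε hε
  set g : X × Y → ℝ := fun p => f p.1 p.2 with hg
  have key : ∀ (U₀ : Set X), IsOpen U₀ → ∀ (S₀ : Finset T) (δ : ℝ), 0 < δ →
      (∀ x ∈ U₀, ∀ y' y'' : Y,
        (∀ s ∈ S₀, |(y' : T → ℝ) s - (y'' : T → ℝ) s| < δ) → |f x y' - f x y''| ≤ ε/5) →
      ∀ x ∈ U₀, ∀ y : Y, osc g (x, y) < ENNReal.ofReal ε := by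
    intro U₀ hU₀ S₀ δ hδ hprop x hx y
    set U' : Set X := U₀ ∩ (fun x' => f x' y) ⁻¹' Metric.ball (f x y) (ε/5) with hU'
    have hU'open : IsOpen U' := hU₀.inter (Metric.isOpen_ball.preimage (hf1 y))
    have hxU' : x ∈ U' := ⟨hx, by simp [Metric.mem_ball]; linarith⟩
    set V : Set Y := {y' : Y | ∀ s ∈ S₀, |(y' : T → ℝ) s - (y : T → ℝ) s| < δ} with hV
    have hVopen : IsOpen V := by
      have hVeq : V = ⋂ s ∈ S₀, (fun (y' : Y) => (y' : T → ℝ) s) ⁻¹' Metric.ball ((y : T → ℝ) s) δ := by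
        ext y'
        simp [hV, Real.dist_eq]
      rw [hVeq]
      exact isOpen_biInter_finset fun s _ =>
        Metric.isOpen_ball.preimage ((continuous_apply s).comp continuous_subtype_val)
    have hyV : y ∈ V := fun s hs => by simpa using hδ
    have hW : U' ×ˢ V ∈ 𝓝 (x, y) := (hU'open.prod hVopen).mem_nhds ⟨hxU', hyV⟩
    have hbound : ∀ p ∈ U' ×ˢ V, ∀ q ∈ U' ×ˢ V, |g p - g q| ≤ 4*(ε/5) := by
      rintro ⟨p1, p2⟩ ⟨hp1, hp2⟩ ⟨q1, q2⟩ ⟨hq1, hq2⟩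
      have h1 : |f p1 p2 - f p1 y| ≤ ε/5 := hprop p1 hp1.1 p2 y (fun s hs => hp2 s hs)
      have h2 : |f p1 y - f x y| < ε/5 := by
        have := hp1.2
        simpa [Real.dist_eq] using this
      have h3 : |f x y - f q1 y| < ε/5 := by
        have := hq1.2
        rw [abs_sub_comm]
        simpa [Real.dist_eq] using this
      have h4 : |f q1 y - f q1 q2| ≤ ε/5 := by
        have := hprop q1 hq1.1 q2 y (fun s hs => hq2 s hs)
        rwa [abs_sub_comm] at this
      have := abs_sub_le (f p1 p2) (f p1 y) (f q1 q2)
      have := abs_sub_le (f p1 y) (f x y) (f q1 q2)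
      have := abs_sub_le (f x y) (f q1 y) (f q1 q2)
      simp only [g]
      linarith
    have hle : osc g (x, y) ≤ ENNReal.ofReal (4*(ε/5)) := osc_le_of_nhds g (x, y) hW hbound
    refine lt_of_le_of_lt hle ?_
    rw [ENNReal.ofReal_lt_ofReal_iff hε]
    linarith
  constructor
  · rw [isOpen_iff_mem_nhds]
    intro x hx
    have hchoice : ∀ y : Y, ∃ (u : Set X) (v : Set Y), IsOpen u ∧ x ∈ u ∧ IsOpen v ∧ y ∈ v ∧
        (⨆ p ∈ u ×ˢ v, ⨆ q ∈ u ×ˢ v, ENNReal.ofReal |g p - g q|) < ENNReal.ofReal ε := by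
      intro y
      have hxy := hx y
      rw [osc] at hxy
      simp only [iInf_lt_iff] at hxy
      obtain ⟨W, hWn, hWlt⟩ := hxy
      obtain ⟨u, v, hu, hxu, hv, hyv, huv⟩ := mem_nhds_prod_iff'.mp hWn
      refine ⟨u, v, hu, hxu, hv, hyv, lt_of_le_of_lt ?_ hWlt⟩
      refine iSup₂_le fun p hp => iSup₂_le fun q hq => ?_
      exact le_iSup₂_of_le p (huv hp) (le_iSup₂_of_le q (huv hq) le_rfl)
    choose u v hu hxu hv hyv hlt using hchoice
    have hYc : IsCompact (Set.univ : Set Y) := by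
      have : CompactSpace Y := isCompact_iff_compactSpace.mp hY
      exact isCompact_univ
    obtain ⟨I, hI⟩ := hYc.elim_finite_subcover v hv (fun y _ => Set.mem_iUnion.mpr ⟨y, hyv y⟩)
    have hUopen : IsOpen (⋂ y ∈ I, u y) := isOpen_biInter_finset fun y _ => hu y
    have hxmem : x ∈ ⋂ y ∈ I, u y := Set.mem_iInter₂.mpr fun y _ => hxu y
    refine Filter.mem_of_superset (hUopen.mem_nhds hxmem) ?_
    intro x' hx' y
    obtain ⟨i, hiI, hyi⟩ := Set.mem_iUnion₂.mp (hI (Set.mem_univ y))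
    have hmem : u i ×ˢ v i ∈ 𝓝 (x', y) :=
      ((hu i).prod (hv i)).mem_nhds ⟨Set.mem_iInter₂.mp hx' i hiI, hyi⟩
    calc osc g (x', y) ≤ ⨆ p ∈ u i ×ˢ v i, ⨆ q ∈ u i ×ˢ v i, ENNReal.ofReal |g p - g q| :=
          iInf₂_le _ hmem
      _ < ENNReal.ofReal ε := hlt i
  · rw [dense_iff_inter_open]
    intro U hU hUne
    obtain ⟨U₀, hU₀o, hU₀ne, hU₀U, S₀, δ, hδ, hprop⟩ := H U hU hUne (ε/5) (by linarith)
    obtain ⟨x₀, hx₀⟩ := hU₀ne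
    exact ⟨x₀, hU₀U hx₀, key U₀ hU₀o S₀ δ hδ hprop x₀ hx₀⟩
end

section
/- Let X be a Baire space, T a set, Y ⊆ ℝ^T a compact subspace, and f : X × Y → ℝ separately continuous. If f has the Namioka property (there is a dense G_δ set A ⊆ X with f jointly continuous at every point of A × Y), then for every nonempty open U ⊆ X and every ε > 0 there exist a nonempty open U₀ ⊆ U and a countable set S₀ ⊆ T such that |f(x,y') - f(x,y'')| ≤ ε for all x ∈ U₀ and all y', y'' ∈ Y with y'|_{S₀} = y''|_{S₀}. -/
open Topology


/-- Theorem 2.4, (i) ⇒ (ii): if a separately continuous function on the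
product of a Baire space and a compact `Y ⊆ ℝ^T` has the Namioka property,
then it satisfies the countable-coordinate dependence condition. -/
theorem stmt7 {X T : Type*} [TopologicalSpace X] [BaireSpace X]
    (Y : Set (T → ℝ)) (hY : IsCompact Y) (f : X → Y → ℝ)
    (hf1 : ∀ y : Y, Continuous fun x => f x y) (hf2 : ∀ x : X, Continuous (f x))
    (hNamioka : ∃ A : Set X, Dense A ∧ IsGδ A ∧
      ∀ a ∈ A, ∀ y : Y, ContinuousAt (fun p : X × Y => f p.1 p.2) (a, y)) :
    ∀ U : Set X, IsOpen U → U.Nonempty → ∀ ε > (0 : ℝ),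
      ∃ U₀ : Set X, IsOpen U₀ ∧ U₀.Nonempty ∧ U₀ ⊆ U ∧
        ∃ S₀ : Set T, S₀.Countable ∧
          ∀ x ∈ U₀, ∀ y' y'' : Y, (∀ s ∈ S₀, (y' : T → ℝ) s = (y'' : T → ℝ) s) →
            |f x y' - f x y''| ≤ ε := by
  obtain ⟨A, hAd, -, hA⟩ := hNamioka
  intro U hU hUne ε hε
  obtain ⟨a, haU, haA⟩ := hAd.inter_open_nonempty U hU hUne
  haveI : CompactSpace Y := isCompact_iff_compactSpace.mp hY
  have key : ∀ y : Y, ∃ (W : Set X) (I : Set T) (δ : T → ℝ),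
      IsOpen W ∧ a ∈ W ∧ I.Finite ∧ (∀ t ∈ I, 0 < δ t) ∧
      ∀ x ∈ W, ∀ z : Y, (∀ t ∈ I, dist ((z : T → ℝ) t) ((y : T → ℝ) t) < δ t) →
        dist (f x z) (f a y) < ε / 2 := by
    intro y
    have hc := hA a haA y
    have hball : (fun p : X × Y => f p.1 p.2) ⁻¹' Metric.ball (f a y) (ε / 2) ∈ 𝓝 (a, y) :=
      hc (Metric.ball_mem_nhds _ (by linarith))
    rw [mem_nhds_prod_iff] at hball
    obtain ⟨u, hu, v, hv, huv⟩ := hball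
    rw [mem_nhds_subtype] at hv
    obtain ⟨w, hw, hwv⟩ := hv
    have hbasis := (Filter.hasBasis_pi fun t : T => Metric.nhds_basis_ball (x := (y : T → ℝ) t))
    rw [← nhds_pi] at hbasis
    obtain ⟨⟨I, δ⟩, ⟨hIfin, hδ⟩, hsub⟩ := hbasis.mem_iff.mp hw
    obtain ⟨u', hu'sub, hu'open, hau'⟩ := mem_nhds_iff.mp hu
    refine ⟨u', I, δ, hu'open, hau', hIfin, hδ, fun x hx z hz => ?_⟩
    have hzv : z ∈ v := hwv (hsub fun t ht => Metric.mem_ball.mpr (hz t ht))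
    exact huv (Set.mk_mem_prod (hu'sub hx) hzv)
  choose W I δ hWopen haW hIfin hδpos hest using key
  have hcover : ∀ y : Y,
      {z : Y | ∀ t ∈ I y, dist ((z : T → ℝ) t) ((y : T → ℝ) t) < δ y t} ∈ 𝓝 y := by
    intro y
    have hpi : (I y).pi (fun t => Metric.ball ((y : T → ℝ) t) (δ y t)) ∈ 𝓝 (y : T → ℝ) :=
      set_pi_mem_nhds (hIfin y) fun t ht => Metric.ball_mem_nhds _ (hδpos y t ht)
    have := continuous_subtype_val.continuousAt (x := y) |>.preimage_mem_nhds hpi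
    exact Filter.mem_of_superset this fun z hz t ht => Metric.mem_ball.mp (hz t ht)
  obtain ⟨F, -, hF⟩ := isCompact_univ.elim_nhds_subcover
    (fun y : Y => {z : Y | ∀ t ∈ I y, dist ((z : T → ℝ) t) ((y : T → ℝ) t) < δ y t})
    (fun y _ => hcover y)
  refine ⟨U ∩ ⋂ y ∈ F, W y, hU.inter (isOpen_biInter_finset fun y _ => hWopen y),
    ⟨a, haU, Set.mem_biInter fun y _ => haW y⟩, Set.inter_subset_left,
    ⋃ y ∈ F, I y, Set.Countable.biUnion F.countable_toSet fun y _ => (hIfin y).countable,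
    ?_⟩
  intro x hx y' y'' hagree
  obtain ⟨y₀, hy₀F, hy₀⟩ : ∃ y₀ ∈ F, ∀ t ∈ I y₀,
      dist ((y' : T → ℝ) t) ((y₀ : T → ℝ) t) < δ y₀ t := by
    have := hF (Set.mem_univ y')
    simpa using this
  have hxW : x ∈ W y₀ := by
    have := hx.2
    simp only [Set.mem_iInter] at this; exact this y₀ hy₀F
  have h1 : dist (f x y') (f a y₀) < ε / 2 := hest y₀ x hxW y' hy₀
  have h2 : dist (f x y'') (f a y₀) < ε / 2 := by
    refine hest y₀ x hxW y'' fun t ht => ?_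
    have heq : (y'' : T → ℝ) t = (y' : T → ℝ) t :=
      (hagree t (Set.mem_biUnion hy₀F ht)).symm
    rw [heq]; exact hy₀ t ht
  have := dist_triangle (f x y') (f a y₀) (f x y'')
  rw [dist_comm (f a y₀) (f x y'')] at this
  calc |f x y' - f x y''| = dist (f x y') (f x y'') := (Real.dist_eq _ _).symm
    _ ≤ ε := by linarith
end

section
/- Let X be a topological space and let 𝒦 be the collection of all nonempty sets E ⊆ X such that for every compact Y ⊆ C_p(X), the image φ_E(Y) is a Corson compact, where φ_E : C_p(X) → C_p(E) is the restriction map y ↦ y|_E. Then 𝒦 is closed under finite unions: if E₁, E₂ ∈ 𝒦 then E₁ ∪ E₂ ∈ 𝒦. -/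
universe u v

/-- A Corson compact: a compact space homeomorphic to a compact `Z ⊆ ℝ^S`
in which every point has countable support. -/
def IsCorsonCompact (K : Type u) [TopologicalSpace K] : Prop :=
  CompactSpace K ∧ ∃ (S : Type v) (Z : Set (S → ℝ)), IsCompact Z ∧
    (∀ z ∈ Z, {s : S | z s ≠ 0}.Countable) ∧ Nonempty (K ≃ₜ Z)

/-- Membership in the system `𝒦`: `E` is a nonempty subset of `X` such that
the image of every compact subset of `C_p(X)` under the restriction map
`y ↦ y|_E` is a Corson compact. -/
def MemK {X : Type u} [TopologicalSpace X] (E : Set X) : Prop :=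
  E.Nonempty ∧ ∀ Y : Set (X → ℝ), (∀ y ∈ Y, Continuous y) → IsCompact Y →
    IsCorsonCompact.{u, u} ((fun (y : X → ℝ) (e : E) => y e) '' Y)

/-- Proposition 4.1: the system `𝒦` is closed under finite unions. -/
theorem stmt10 {X : Type u} [TopologicalSpace X] (E₁ E₂ : Set X)
    (h₁ : MemK E₁) (h₂ : MemK E₂) : MemK (E₁ ∪ E₂) := by
  obtain ⟨hne₁, hK₁⟩ := h₁
  obtain ⟨hne₂, hK₂⟩ := h₂
  refine ⟨hne₁.mono Set.subset_union_left, ?_⟩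
  intro Y hYc hYcomp
  -- the images over E₁, E₂ are Corson compacts
  obtain ⟨hC₁, S₁, Z₁, hZ₁c, hZ₁supp, ⟨e₁⟩⟩ := hK₁ Y hYc hYcomp
  obtain ⟨hC₂, S₂, Z₂, hZ₂c, hZ₂supp, ⟨e₂⟩⟩ := hK₂ Y hYc hYcomp
  set A : Set ((E₁ ∪ E₂ : Set X) → ℝ) :=
    (fun (y : X → ℝ) (e : (E₁ ∪ E₂ : Set X)) => y e) '' Y with hA
  have hAcomp : IsCompact A :=
    hYcomp.image (continuous_pi fun e => continuous_apply (e : X))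
  haveI : CompactSpace A := isCompact_iff_compactSpace.mp hAcomp
  -- restriction maps A → image over Eᵢ
  have hr₁ : ∀ a : A, (fun (x : E₁) => a.1 ⟨x.1, Or.inl x.2⟩) ∈
      ((fun (y : X → ℝ) (e : E₁) => y e) '' Y) := by
    rintro ⟨a, y, hy, rfl⟩
    exact ⟨y, hy, rfl⟩
  have hr₂ : ∀ a : A, (fun (x : E₂) => a.1 ⟨x.1, Or.inr x.2⟩) ∈
      ((fun (y : X → ℝ) (e : E₂) => y e) '' Y) := by
    rintro ⟨a, y, hy, rfl⟩
    exact ⟨y, hy, rfl⟩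
  set g₁ : A → ((fun (y : X → ℝ) (e : E₁) => y e) '' Y) :=
    fun a => ⟨_, hr₁ a⟩ with hg₁
  set g₂ : A → ((fun (y : X → ℝ) (e : E₂) => y e) '' Y) :=
    fun a => ⟨_, hr₂ a⟩ with hg₂
  have hg₁c : Continuous g₁ := by
    apply Continuous.subtype_mk
    exact continuous_pi fun x =>
      (continuous_apply ((⟨x.1, Or.inl x.2⟩ : (E₁ ∪ E₂ : Set X)))).comp continuous_subtype_val
  have hg₂c : Continuous g₂ := by
    apply Continuous.subtype_mk
    exact continuous_pi fun x =>
      (continuous_apply ((⟨x.1, Or.inr x.2⟩ : (E₁ ∪ E₂ : Set X)))).comp continuous_subtype_val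
  -- the embedding into ℝ^(S₁ ⊕ S₂)
  set f : A → ((S₁ ⊕ S₂) → ℝ) :=
    fun a => Sum.elim ((e₁ (g₁ a)) : S₁ → ℝ) ((e₂ (g₂ a)) : S₂ → ℝ) with hf
  have hfc : Continuous f := by
    refine continuous_pi fun s => ?_
    cases s with
    | inl s =>
        exact (continuous_apply s).comp
          (continuous_subtype_val.comp (e₁.continuous.comp hg₁c))
    | inr s =>
        exact (continuous_apply s).comp
          (continuous_subtype_val.comp (e₂.continuous.comp hg₂c))
  have hfinj : Function.Injective f := by
    intro a b hab
    have h1 : g₁ a = g₁ b := by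
      apply e₁.injective
      ext s
      exact congrFun hab (Sum.inl s)
    have h2 : g₂ a = g₂ b := by
      apply e₂.injective
      ext s
      exact congrFun hab (Sum.inr s)
    apply Subtype.ext
    funext x
    rcases x.2 with hx | hx
    · have := congrFun (congrArg Subtype.val h1) ⟨x.1, hx⟩
      simpa using this
    · have := congrFun (congrArg Subtype.val h2) ⟨x.1, hx⟩
      simpa using this
  have hemb : Topology.IsEmbedding f :=
    (hfc.isClosedEmbedding hfinj).toIsEmbedding
  refine ⟨isCompact_iff_compactSpace.mp hAcomp, S₁ ⊕ S₂, Set.range f,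
    isCompact_range hfc, ?_, ⟨hemb.toHomeomorph⟩⟩
  rintro z ⟨a, rfl⟩
  have hsub : {s : S₁ ⊕ S₂ | f a s ≠ 0} ⊆
      Sum.inl '' {s : S₁ | ((e₁ (g₁ a)) : S₁ → ℝ) s ≠ 0} ∪
      Sum.inr '' {s : S₂ | ((e₂ (g₂ a)) : S₂ → ℝ) s ≠ 0} := by
    intro s hs
    cases s with
    | inl s => exact Or.inl ⟨s, hs, rfl⟩
    | inr s => exact Or.inr ⟨s, hs, rfl⟩
  exact Set.Countable.mono hsub
    (((hZ₁supp _ (e₁ (g₁ a)).2).image _).union ((hZ₂supp _ (e₂ (g₂ a)).2).image _))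
end

section
/- Let X be a topological space, Z ⊆ ℝ^X a compact subspace, g : X × Z → ℝ defined by g(x,z) = z(x), E ⊆ X a subset, and x₀ a point in the closure of E. Suppose g(x₀, z') = g(x₀, z'') for all z', z'' ∈ Z with z'|_E = z''|_E. Then for every ε > 0 there is a finite set A ⊆ E such that |g(x₀,z') - g(x₀,z'')| < ε for all z', z'' ∈ Z with z'|_A = z''|_A. -/
/-- Specialization of Proposition 2.2 used in Theorem 4.3: for a compact
`Z ⊆ ℝ^X`, the evaluation `g(x,z) = z(x)`, `E ⊆ X` and `x₀ ∈ cl E`, if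
`g(x₀,·)` is determined by restriction to `E`, then for every `ε > 0` it is
`ε`-determined by restriction to some finite `A ⊆ E`. -/
theorem stmt14 {X : Type*} [TopologicalSpace X] (Z : Set (X → ℝ))
    (hZ : IsCompact Z) (E : Set X) (x₀ : X) (hx₀ : x₀ ∈ closure E)
    (h : ∀ z' z'' : Z, (∀ e ∈ E, (z' : X → ℝ) e = (z'' : X → ℝ) e) →
      (z' : X → ℝ) x₀ = (z'' : X → ℝ) x₀) :
    ∀ ε > (0 : ℝ), ∃ A : Finset X, ↑A ⊆ E ∧
      ∀ z' z'' : Z, (∀ a ∈ A, (z' : X → ℝ) a = (z'' : X → ℝ) a) →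
        |(z' : X → ℝ) x₀ - (z'' : X → ℝ) x₀| < ε := by
  intro ε hε
  -- the "bad" set
  set K : Set ((X → ℝ) × (X → ℝ)) :=
    (Z ×ˢ Z) ∩ {p | ε ≤ |p.1 x₀ - p.2 x₀|} with hK
  have hcont : Continuous fun p : (X → ℝ) × (X → ℝ) => |p.1 x₀ - p.2 x₀| :=
    (((continuous_apply x₀).comp continuous_fst).sub
      ((continuous_apply x₀).comp continuous_snd)).abs
  have hKcl : IsClosed {p : (X → ℝ) × (X → ℝ) | ε ≤ |p.1 x₀ - p.2 x₀|} :=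
    isClosed_le continuous_const hcont
  have hKcomp : IsCompact K :=
    (hZ.prod hZ).inter_right hKcl
  have hUopen : ∀ e ∈ E, IsOpen {p : (X → ℝ) × (X → ℝ) | p.1 e ≠ p.2 e} := by
    intro e _
    have : Continuous fun p : (X → ℝ) × (X → ℝ) => p.1 e - p.2 e :=
      ((continuous_apply e).comp continuous_fst).sub
        ((continuous_apply e).comp continuous_snd)
    have : IsOpen {p : (X → ℝ) × (X → ℝ) | p.1 e - p.2 e ≠ 0} :=
      isOpen_ne.preimage this
    convert this using 1
    ext p
    simp [sub_eq_zero]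
  have hcover : K ⊆ ⋃ e ∈ E, {p : (X → ℝ) × (X → ℝ) | p.1 e ≠ p.2 e} := by
    rintro ⟨z', z''⟩ ⟨⟨hz', hz''⟩, hp⟩
    by_contra hcon
    simp only [Set.mem_iUnion, Set.mem_setOf_eq, not_exists, not_not] at hcon
    have := h ⟨z', hz'⟩ ⟨z'', hz''⟩ (fun e he => hcon e he)
    simp only [Subtype.coe_mk] at this
    simp only [Set.mem_setOf_eq] at hp
    rw [this, sub_self, abs_zero] at hp
    linarith
  obtain ⟨b, hbE, hbfin, hbcov⟩ :=
    hKcomp.elim_finite_subcover_image hUopen hcover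
  refine ⟨hbfin.toFinset, by simpa using hbE, ?_⟩
  intro z' z'' hagree
  by_contra hcon
  push_neg at hcon
  have hmem : ((z' : X → ℝ), (z'' : X → ℝ)) ∈ K :=
    ⟨⟨z'.2, z''.2⟩, hcon⟩
  obtain ⟨e, he, hne⟩ := by
    have := hbcov hmem
    simpa only [Set.mem_iUnion, Set.mem_setOf_eq] using this
  exact hne (hagree e (hbfin.mem_toFinset.mpr he))
end

section
/- Let Y be a compact space, X a topological space, f : X × Y → ℝ separately continuous, and φ : Y → C_p(X) the map φ(y)(x) = f(x,y). Then φ is continuous, Z = φ(Y) is a compact subspace of ℝ^X, the evaluation g : X × Z → ℝ, g(x,z) = z(x), is separately continuous, and f has the Namioka property if and only if g has the Namioka property. -/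
open Topology Filter


/-- The reduction step in Theorem 4.3: for compact `Y`, separately continuous
`f : X × Y → ℝ` and `φ : Y → C_p(X)`, `φ(y)(x) = f(x,y)`, the map `φ` is
continuous, `Z = φ(Y)` is a compact subspace of `ℝ^X`, the evaluation
`g(x,z) = z(x)` on `X × Z` is separately continuous, and `f` has the Namioka
property iff `g` has the Namioka property. -/
theorem stmt15 {X Y : Type*} [TopologicalSpace X] [TopologicalSpace Y]
    [CompactSpace Y] (f : X → Y → ℝ)
    (hf1 : ∀ y : Y, Continuous fun x => f x y) (hf2 : ∀ x : X, Continuous (f x))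
    (φ : Y → X → ℝ) (hφ : φ = fun y x => f x y) :
    Continuous φ ∧
    IsCompact (Set.range φ) ∧
    (∀ x : X, Continuous fun z : Set.range φ => (z : X → ℝ) x) ∧
    (∀ z : Set.range φ, Continuous fun x : X => (z : X → ℝ) x) ∧
    ((∃ A : Set X, Dense A ∧ IsGδ A ∧
        ∀ a ∈ A, ∀ y : Y, ContinuousAt (fun p : X × Y => f p.1 p.2) (a, y)) ↔
      (∃ A : Set X, Dense A ∧ IsGδ A ∧
        ∀ a ∈ A, ∀ z : Set.range φ,
          ContinuousAt (fun p : X × Set.range φ => (p.2 : X → ℝ) p.1) (a, z))) := by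
  subst hφ
  have hφc : Continuous (fun y x => f x y : Y → X → ℝ) :=
    continuous_pi fun x => hf2 x
  refine ⟨hφc, isCompact_range hφc,
    fun x => (continuous_apply x).comp continuous_subtype_val, fun z => ?_, ?_⟩
  · obtain ⟨y, hy⟩ := z.2
    have hz : (fun x => (z : X → ℝ) x) = fun x => f x y := by
      funext x; rw [← hy]
    rw [hz]; exact hf1 y
  constructor
  · rintro ⟨A, hAd, hAG, hA⟩
    refine ⟨A, hAd, hAG, fun a ha z => ?_⟩
    rw [ContinuousAt, Metric.tendsto_nhds]
    intro ε hε
    have key : ∀ y : Y, ∃ U ∈ 𝓝 a, ∃ W ∈ 𝓝 y,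
        ∀ x ∈ U, ∀ y' ∈ W, dist (f x y') (f a y) < ε / 4 := by
      intro y
      have h1 : {p : X × Y | dist (f p.1 p.2) (f a y) < ε / 4} ∈ 𝓝 (a, y) :=
        hA a ha y (Metric.ball_mem_nhds _ (by positivity))
      rw [mem_nhds_prod_iff] at h1
      obtain ⟨U, hU, W, hW, hUW⟩ := h1
      exact ⟨U, hU, W, hW, fun x hx y' hy' => hUW (Set.mk_mem_prod hx hy')⟩
    choose U hU W hW hUW using key
    obtain ⟨t, -, ht⟩ := isCompact_univ.elim_nhds_subcover W (fun y _ => hW y)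
    have hV : (⋂ y ∈ t, U y) ∈ 𝓝 a :=
      (Filter.biInter_finset_mem t).mpr fun y _ => hU y
    have hkey : ∀ x ∈ ⋂ y ∈ t, U y, ∀ y : Y, dist (f x y) (f a y) < ε / 2 := by
      intro x hx y
      obtain ⟨i, hit, hyi⟩ := Set.mem_iUnion₂.mp (ht (Set.mem_univ y))
      have h1 := hUW i x (Set.mem_iInter₂.mp hx i hit) y hyi
      have h2 := hUW i a (mem_of_mem_nhds (hU i)) y hyi
      calc dist (f x y) (f a y)
          ≤ dist (f x y) (f a i) + dist (f a i) (f a y) := dist_triangle _ _ _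
        _ < ε / 4 + ε / 4 := add_lt_add h1 (by rw [dist_comm]; exact h2)
        _ = ε / 2 := by ring
    have hVz := ((continuous_apply a).comp
        continuous_subtype_val).continuousAt.preimage_mem_nhds
        (Metric.ball_mem_nhds ((z : X → ℝ) a) (half_pos hε))
    filter_upwards [prod_mem_nhds hV hVz] with p hp
    obtain ⟨hp1, hp2⟩ := hp
    obtain ⟨y', hy'⟩ := p.2.2
    calc dist ((p.2 : X → ℝ) p.1) ((z : X → ℝ) a)
        ≤ dist ((p.2 : X → ℝ) p.1) ((p.2 : X → ℝ) a)
          + dist ((p.2 : X → ℝ) a) ((z : X → ℝ) a) := dist_triangle _ _ _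
      _ < ε / 2 + ε / 2 := by
          refine add_lt_add ?_ (by simpa [Metric.mem_ball] using hp2)
          rw [← hy']
          exact hkey p.1 hp1 y'
      _ = ε := by ring
  · rintro ⟨A, hAd, hAG, hA⟩
    refine ⟨A, hAd, hAG, fun a ha y => ?_⟩
    have hmap : Continuous (fun p : X × Y =>
        ((p.1, ⟨fun x => f x p.2, Set.mem_range_self p.2⟩) :
          X × Set.range (fun y x => f x y : Y → X → ℝ))) :=
      continuous_fst.prodMk ((hφc.comp continuous_snd).subtype_mk _)
    have h2 : ContinuousAt ((fun p : X × Set.range (fun y x => f x y : Y → X → ℝ) =>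
        (p.2 : X → ℝ) p.1) ∘ (fun p : X × Y =>
        (p.1, ⟨fun x => f x p.2, Set.mem_range_self p.2⟩))) (a, y) :=
      ContinuousAt.comp (hA a ha ⟨fun x => f x y, Set.mem_range_self y⟩)
        hmap.continuousAt
    exact h2
end
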